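/- For each integer n \u2265 2, let T_n be the tree obtained from the star K_{1,n} (centre c with leaves l_1, ..., l_n) by adding two new leaves adjacent to each l_i. Then \u03b3(T_n) = n while \u03b3^\u221e_{all,2}(T_n) = 2. In particular, for n \u2265 3 the eternal distance-2 domination number of T_n is strictly less than its domination number, even though every vertex of the (unique) minimum dominating set {l_1, ..., l_n} has at least two private neighbours. -/

import Mathlib

open SimpleGraph

universe u v

namespace EternalDom

variable {V : Type u} {W : Type v}

/-- `x` is within distance `k` of `y` in `G` (in particular, a path between them exists). -/
def WithinDist (G : SimpleGraph V) (k : ℕ) (x y : V) : Prop :=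
  G.Reachable x y ∧ G.dist x y ≤ k

/-- A multiset of guards is distance-`k` dominating: every vertex is within
distance `k` of some guard. -/
def IsDistKDomMultiset (G : SimpleGraph V) (k : ℕ) (D : Multiset V) : Prop :=
  ∀ w : V, ∃ x ∈ D, WithinDist G k x w

/-- `F` is an eternal distance-`k` defence family of guard configurations of size `m`:
a nonempty family of distance-`k` dominating multisets, all of cardinality `m`, such that
for every configuration `D ∈ F` and every attacked vertex `w` there is a configuration
`D' ∈ F` containing `w` that is obtained from `D` by a matching (bijection) moving each
guard a distance of at most `k`. -/
def IsEternalFamily (G : SimpleGraph V) (k m : ℕ) (F : Set (Multiset V)) : Prop :=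
  F.Nonempty ∧
    (∀ D ∈ F, Multiset.card D = m ∧ IsDistKDomMultiset G k D) ∧
    (∀ D ∈ F, ∀ w : V, ∃ D' ∈ F, w ∈ D' ∧ Multiset.Rel (WithinDist G k) D D')

/-- The eternal distance-`k` domination number `γ^∞_{all,k}(G)`. -/
noncomputable def eternalNum (G : SimpleGraph V) (k : ℕ) : ℕ :=
  sInf {m | ∃ F : Set (Multiset V), IsEternalFamily G k m F}

/-- `x` dominates `w`: they are equal or adjacent. -/
def Dominates (G : SimpleGraph V) (x w : V) : Prop := w = x ∨ G.Adj x w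

/-- A dominating set of vertices. -/
def IsDomSet (G : SimpleGraph V) (D : Set V) : Prop := ∀ w : V, ∃ x ∈ D, Dominates G x w

/-- The domination number `γ(G)`. -/
noncomputable def domNum (G : SimpleGraph V) : ℕ :=
  sInf {n | ∃ D : Set V, IsDomSet G D ∧ D.ncard = n}

/-- A distance-`k` dominating set of vertices. -/
def IsDistKDomSet (G : SimpleGraph V) (k : ℕ) (D : Set V) : Prop :=
  ∀ w : V, ∃ x ∈ D, WithinDist G k x w

/-- The distance-`k` domination number `γ_k(G)`. -/
noncomputable def distDomNum (G : SimpleGraph V) (k : ℕ) : ℕ :=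
  sInf {n | ∃ D : Set V, IsDistKDomSet G k D ∧ D.ncard = n}

/-- A leaf: a vertex of degree 1, i.e. with a unique neighbour. -/
def IsLeafV (G : SimpleGraph V) (x : V) : Prop := ∃! y, G.Adj x y

/-- A stem: a vertex adjacent to at least one leaf. -/
def IsStem (G : SimpleGraph V) (x : V) : Prop := ∃ y, G.Adj x y ∧ IsLeafV G y

/-- `k`-leaves: a `0`-leaf is a leaf; for `k > 0`, `v` is a `k`-leaf iff `v` is adjacent to
some `(k-1)`-leaf and all but at most one of the neighbours of `v` are `t`-leaves for some
`t < k`. -/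
def IsKLeaf (G : SimpleGraph V) : ℕ → V → Prop
  | 0, v => IsLeafV G v
  | (k + 1), v =>
      (∃ u, G.Adj v u ∧ IsKLeaf G k u) ∧
        ∃ w : V, ∀ x : V, G.Adj v x → x ≠ w → ∃ t, ∃ _ : t ≤ k, IsKLeaf G t x
  termination_by k _ => k
  decreasing_by all_goals omega

/-- For a 2-leaf `v`, the set `L(v)`: the union of `L[u]` over all neighbours `u` of `v`
which are 0-leaves or 1-leaves, where for a 1-leaf `u`, `L[u]` consists of `u` and the leaves
adjacent to `u`. -/
def Lopen (G : SimpleGraph V) (v : V) : Set V :=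
  {x | ∃ u, G.Adj v u ∧
    ((IsKLeaf G 0 u ∧ x = u) ∨
      (IsKLeaf G 1 u ∧ (x = u ∨ (G.Adj u x ∧ IsKLeaf G 0 x))))}

/-- For a 2-leaf `v`, the set `L[v] = L(v) ∪ {v}`. -/
def Lclosed (G : SimpleGraph V) (v : V) : Set V := insert v (Lopen G v)

/-- A graph is eternal distance-2 domination critical if deleting any non-cut vertex
(one whose removal leaves the graph connected) strictly decreases the eternal
distance-2 domination number. -/
def EternalCritical (G : SimpleGraph V) : Prop :=
  ∀ x : V, (G.induce {y | y ≠ x}).Connected →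
    eternalNum (G.induce {y | y ≠ x}) 2 < eternalNum G 2

/-- Attach a pendant path `x₁ x₂ … xₙ` on `n` new vertices to the vertex `y`,
via the edge `y x₁`. -/
def attachPath (G : SimpleGraph V) (y : V) (n : ℕ) : SimpleGraph (V ⊕ Fin n) :=
  G.map Sum.inl ⊔ (pathGraph n).map Sum.inr ⊔
    fromEdgeSet {e | ∃ h : 0 < n, e = s(Sum.inl y, Sum.inr ⟨0, h⟩)}

/-- The star `K_{1,m}`: centre `0`, leaves the `m` nonzero elements of `Fin (m+1)`. -/
def starGraph (m : ℕ) : SimpleGraph (Fin (m + 1)) where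
  Adj x y := (x = 0 ∧ y ≠ 0) ∨ (y = 0 ∧ x ≠ 0)
  symm := ⟨fun x y => by tauto⟩
  loopless := ⟨by rintro x (⟨h1, h2⟩ | ⟨h1, h2⟩) <;> exact h2 h1⟩

/-- Disjoint union of `G` and the star `K_{1,m}` together with one edge joining the
vertex `a` of the star to the vertex `y` of `G`. -/
def attachStar (G : SimpleGraph V) (y : V) (m : ℕ) (a : Fin (m + 1)) :
    SimpleGraph (V ⊕ Fin (m + 1)) :=
  G.map Sum.inl ⊔ (starGraph m).map Sum.inr ⊔
    fromEdgeSet {s(Sum.inl y, Sum.inr a)}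

/-- From `G` and a vertex `v`: add a new star `K_{1,m}` joined by an edge from its centre
to `v`, together with `t` new leaves adjacent to `v`. -/
def addStarAndLeaves (G : SimpleGraph V) (v : V) (m t : ℕ) :
    SimpleGraph (V ⊕ (Fin (m + 1) ⊕ Fin t)) :=
  G.map Sum.inl ⊔
    (starGraph m).map (Sum.inr ∘ Sum.inl) ⊔
    fromEdgeSet ({s(Sum.inl v, Sum.inr (Sum.inl 0))} ∪
      {e | ∃ i : Fin t, e = s(Sum.inl v, Sum.inr (Sum.inr i))})

/-- From `G` and a vertex `v`: add two new stars `K_{1,m}` and `K_{1,M}`, joining the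
centre of each new star to `v` by an edge. -/
def addTwoStars (G : SimpleGraph V) (v : V) (m M : ℕ) :
    SimpleGraph (V ⊕ (Fin (m + 1) ⊕ Fin (M + 1))) :=
  G.map Sum.inl ⊔
    (starGraph m).map (Sum.inr ∘ Sum.inl) ⊔
    (starGraph M).map (Sum.inr ∘ Sum.inr) ⊔
    fromEdgeSet {s(Sum.inl v, Sum.inr (Sum.inl 0)), s(Sum.inl v, Sum.inr (Sum.inr 0))}

/-- The 1-sum of `G` and `H` at the vertex `u` of `G` and the vertex `w` of `H`:
the disjoint union of `G` and `H` with `u` and `w` identified. -/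
def oneSum (G : SimpleGraph V) (H : SimpleGraph W) (u : V) (w : W) :
    SimpleGraph (V ⊕ {x : W // x ≠ w}) where
  Adj x y :=
    match x, y with
    | Sum.inl a, Sum.inl b => G.Adj a b
    | Sum.inr a, Sum.inr b => H.Adj a.1 b.1
    | Sum.inl a, Sum.inr b => a = u ∧ H.Adj w b.1
    | Sum.inr a, Sum.inl b => b = u ∧ H.Adj w a.1
  symm := ⟨by
    rintro (a | a) (b | b) h
    · exact h.symm
    · exact h
    · exact h
    · exact h.symm⟩
  loopless := ⟨by
    rintro (a | a) h
    · exact G.loopless.irrefl a h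
    · exact H.loopless.irrefl a.1 h⟩


/-- The tree `T_n`: a star `K_{1,n}` with two extra leaves added to each leaf of the star. -/
def spider (n : ℕ) : SimpleGraph (Unit ⊕ (Fin n ⊕ Fin n × Fin 2)) :=
  fromEdgeSet ({e | ∃ i : Fin n, e = s(Sum.inl (), Sum.inr (Sum.inl i))} ∪
    {e | ∃ (i : Fin n) (j : Fin 2), e = s(Sum.inr (Sum.inl i), Sum.inr (Sum.inr (i, j)))})

/-- The set `{l_1, …, l_n}` of middle vertices of `T_n`. -/
def spiderMid (n : ℕ) : Set (Unit ⊕ (Fin n ⊕ Fin n × Fin 2)) :=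
  {x | ∃ i : Fin n, x = Sum.inr (Sum.inl i)}

/-- `w` is a private neighbour of `x` with respect to `D`: `w` is dominated by `x` and by
no other member of `D`. -/
def IsPrivateNbr (G : SimpleGraph V) (D : Set V) (x w : V) : Prop :=
  Dominates G x w ∧ ∀ d ∈ D, d ≠ x → ¬ Dominates G d w


-- ===== auxiliary material for `spider_example` =====

abbrev ctr (n : ℕ) : Unit ⊕ (Fin n ⊕ Fin n × Fin 2) := Sum.inl ()
abbrev mid {n : ℕ} (i : Fin n) : Unit ⊕ (Fin n ⊕ Fin n × Fin 2) := Sum.inr (Sum.inl i)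
abbrev lf {n : ℕ} (i : Fin n) (j : Fin 2) : Unit ⊕ (Fin n ⊕ Fin n × Fin 2) :=
  Sum.inr (Sum.inr (i, j))

lemma spider_adj {n : ℕ} {x y : Unit ⊕ (Fin n ⊕ Fin n × Fin 2)} :
    (spider n).Adj x y ↔
      (∃ i, x = ctr n ∧ y = mid i) ∨ (∃ i, y = ctr n ∧ x = mid i) ∨
      (∃ i j, x = mid i ∧ y = lf i j) ∨ (∃ i j, y = mid i ∧ x = lf i j) := by
  simp only [spider, fromEdgeSet_adj, Set.mem_union, Set.mem_setOf_eq, Sym2.eq, Sym2.rel_iff',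
    Prod.mk.injEq, Prod.swap_prod_mk]
  constructor
  · rintro ⟨(⟨i, h | h⟩ | ⟨i, j, h | h⟩), hne⟩ <;> simp_all
  · rintro (⟨i, rfl, rfl⟩ | ⟨i, rfl, rfl⟩ | ⟨i, j, rfl, rfl⟩ | ⟨i, j, rfl, rfl⟩)
    · exact ⟨Or.inl ⟨i, Or.inl ⟨rfl, rfl⟩⟩, by simp⟩
    · exact ⟨Or.inl ⟨i, Or.inr ⟨rfl, rfl⟩⟩, by simp⟩
    · exact ⟨Or.inr ⟨i, j, Or.inl ⟨rfl, rfl⟩⟩, by simp⟩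
    · exact ⟨Or.inr ⟨i, j, Or.inr ⟨rfl, rfl⟩⟩, by simp⟩

lemma adj_ctr_mid {n : ℕ} (i : Fin n) : (spider n).Adj (ctr n) (mid i) :=
  spider_adj.2 (Or.inl ⟨i, rfl, rfl⟩)

lemma adj_mid_lf {n : ℕ} (i : Fin n) (j : Fin 2) : (spider n).Adj (mid i) (lf i j) :=
  spider_adj.2 (Or.inr (Or.inr (Or.inl ⟨i, j, rfl, rfl⟩)))

lemma ctr_walk {n : ℕ} (w : Unit ⊕ (Fin n ⊕ Fin n × Fin 2)) :
    ∃ p : (spider n).Walk (ctr n) w, p.length ≤ 2 := by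
  rcases w with _ | i | ⟨i, j⟩
  · exact ⟨Walk.nil, by simp⟩
  · exact ⟨(adj_ctr_mid i).toWalk, by simp⟩
  · exact ⟨Walk.cons (adj_ctr_mid i) (adj_mid_lf i j).toWalk, by simp⟩

lemma within_ctr {n : ℕ} (w : Unit ⊕ (Fin n ⊕ Fin n × Fin 2)) :
    WithinDist (spider n) 2 (ctr n) w := by
  obtain ⟨p, hp⟩ := ctr_walk w
  exact ⟨⟨p⟩, le_trans (dist_le p) hp⟩

lemma within_ctr' {n : ℕ} (w : Unit ⊕ (Fin n ⊕ Fin n × Fin 2)) :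
    WithinDist (spider n) 2 w (ctr n) := by
  obtain ⟨hr, hd⟩ := within_ctr w
  exact ⟨hr.symm, by rwa [SimpleGraph.dist_comm]⟩

lemma walk_abs {A : Type*} {G : SimpleGraph A} (f : A → ℤ)
    (hf : ∀ a b, G.Adj a b → |f a - f b| ≤ 1) :
    ∀ {x y : A} (p : G.Walk x y), |f x - f y| ≤ p.length := by
  intro x y p
  induction p with
  | nil => simp
  | @cons a b c h p ih =>
    have h1 := hf _ _ h
    have h2 := abs_sub_le (f a) (f b) (f c)
    simp only [Walk.length_cons]
    push_cast
    omega

/-- the potential function centred at branch `i0` -/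
def pot {n : ℕ} (i0 : Fin n) : Unit ⊕ (Fin n ⊕ Fin n × Fin 2) → ℤ
  | Sum.inl _ => 2
  | Sum.inr (Sum.inl i) => if i = i0 then 1 else 3
  | Sum.inr (Sum.inr (i, _)) => if i = i0 then 0 else 4

lemma pot_adj {n : ℕ} (i0 : Fin n) {a b : Unit ⊕ (Fin n ⊕ Fin n × Fin 2)}
    (h : (spider n).Adj a b) : |pot i0 a - pot i0 b| ≤ 1 := by
  rcases spider_adj.1 h with ⟨i, rfl, rfl⟩ | ⟨i, rfl, rfl⟩ | ⟨i, j, rfl, rfl⟩ | ⟨i, j, rfl, rfl⟩ <;>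
    simp only [pot] <;> split_ifs <;> norm_num

lemma not_within_lf_lf {n : ℕ} {i0 i1 : Fin n} (hne : i0 ≠ i1) (j0 j1 : Fin 2) :
    ¬ WithinDist (spider n) 2 (lf i0 j0) (lf i1 j1) := by
  rintro ⟨hr, hd⟩
  obtain ⟨p, hp⟩ := hr.exists_walk_length_eq_dist
  have h1 := walk_abs (pot i0) (fun a b h => pot_adj i0 h) p
  simp only [pot, if_pos rfl, if_neg (Ne.symm hne)] at h1
  rw [hp] at h1
  norm_num at h1
  omega

/-- who can dominate a leaf -/
lemma dominates_lf {n : ℕ} {x : Unit ⊕ (Fin n ⊕ Fin n × Fin 2)} {i : Fin n} {j : Fin 2}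
    (h : Dominates (spider n) x (lf i j)) : x = lf i j ∨ x = mid i := by
  rcases h with h | h
  · exact Or.inl h.symm
  · rcases spider_adj.1 h with ⟨i', h1, h2⟩ | ⟨i', h1, h2⟩ | ⟨i', j', h1, h2⟩ | ⟨i', j', h1, h2⟩
    · simp at h2
    · simp at h1
    · obtain ⟨hi, hj⟩ : i' = i ∧ j' = j := by simpa [Prod.ext_iff] using h2.symm
      exact Or.inr (hi ▸ h1)
    · simp at h1

def branch {n : ℕ} : Unit ⊕ (Fin n ⊕ Fin n × Fin 2) → Option (Fin n)
  | Sum.inl _ => none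
  | Sum.inr (Sum.inl i) => some i
  | Sum.inr (Sum.inr (i, _)) => some i

lemma ncard_range_some (n : ℕ) : (Set.range (some : Fin n → Option (Fin n))).ncard = n := by
  rw [← Set.image_univ, Set.ncard_image_of_injective _ (Option.some_injective _),
    Set.ncard_univ, Nat.card_eq_fintype_card, Fintype.card_fin]

lemma dom_key {n : ℕ} {D : Set (Unit ⊕ (Fin n ⊕ Fin n × Fin 2))}
    (hD : IsDomSet (spider n) D) (i : Fin n) (j : Fin 2) :
    ∃ x ∈ D, x = lf i j ∨ x = mid i := by
  obtain ⟨x, hx, hdom⟩ := hD (lf i j)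
  exact ⟨x, hx, dominates_lf hdom⟩

lemma dom_lower {n : ℕ} {D : Set (Unit ⊕ (Fin n ⊕ Fin n × Fin 2))}
    (hD : IsDomSet (spider n) D) : n ≤ D.ncard := by
  have h1 : Set.range (some : Fin n → Option (Fin n)) ⊆ branch '' D := by
    rintro _ ⟨i, rfl⟩
    obtain ⟨x, hx, hc⟩ := dom_key hD i 0
    exact ⟨x, hx, by rcases hc with rfl | rfl <;> rfl⟩
  calc n = (Set.range (some : Fin n → Option (Fin n))).ncard := (ncard_range_some n).symm
    _ ≤ (branch '' D).ncard := Set.ncard_le_ncard h1 (Set.toFinite _)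
    _ ≤ D.ncard := Set.ncard_image_le (Set.toFinite _)

lemma mid_injective {n : ℕ} : Function.Injective (fun i : Fin n => mid i) := by
  intro a b h
  simpa using h

lemma ncard_spiderMid {n : ℕ} : (spiderMid n).ncard = n := by
  have h : spiderMid n = Set.range (fun i : Fin n => mid i) := by
    ext x; simp [spiderMid, Set.range, eq_comm]
  rw [h, ← Set.image_univ, Set.ncard_image_of_injective _ mid_injective,
    Set.ncard_univ, Nat.card_eq_fintype_card, Fintype.card_fin]

lemma spiderMid_dom {n : ℕ} (hn : 0 < n) : IsDomSet (spider n) (spiderMid n) := by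
  intro w
  rcases w with _ | i | ⟨i, j⟩
  · exact ⟨mid ⟨0, hn⟩, ⟨⟨0, hn⟩, rfl⟩, Or.inr (adj_ctr_mid _).symm⟩
  · exact ⟨mid i, ⟨i, rfl⟩, Or.inl rfl⟩
  · exact ⟨mid i, ⟨i, rfl⟩, Or.inr (adj_mid_lf i j)⟩

lemma dom_unique {n : ℕ} (hn : 2 ≤ n) {D : Set (Unit ⊕ (Fin n ⊕ Fin n × Fin 2))}
    (hD : IsDomSet (spider n) D) (hcard : D.ncard = n) : D = spiderMid n := by
  have hmid : ∀ i : Fin n, mid i ∈ D := by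
    intro i
    by_contra hni
    have h1 : lf i 1 ∈ D := by
      obtain ⟨x, hx, hc⟩ := dom_key hD i 1
      rcases hc with rfl | rfl
      · exact hx
      · exact absurd hx hni
    have hsub : Set.range (some : Fin n → Option (Fin n)) ⊆ branch '' (D \ {lf i 1}) := by
      rintro _ ⟨i', rfl⟩
      obtain ⟨x, hx, hc⟩ := dom_key hD i' 0
      refine ⟨x, ⟨hx, ?_⟩, by rcases hc with rfl | rfl <;> rfl⟩
      simp only [Set.mem_singleton_iff]
      rintro rfl
      rcases hc with h | h <;> simp [Prod.ext_iff] at h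
    have h2 : n ≤ (D \ {lf i 1}).ncard := by
      calc n = (Set.range (some : Fin n → Option (Fin n))).ncard := (ncard_range_some n).symm
        _ ≤ (branch '' (D \ {lf i 1})).ncard := Set.ncard_le_ncard hsub (Set.toFinite _)
        _ ≤ (D \ {lf i 1}).ncard := Set.ncard_image_le (Set.toFinite _)
    have h3 : (D \ {lf i 1}).ncard + 1 = D.ncard :=
      Set.ncard_diff_singleton_add_one h1 (Set.toFinite _)
    omega
  have hsub : spiderMid n ⊆ D := by
    rintro x ⟨i, rfl⟩
    exact hmid i
  exact (Set.eq_of_subset_of_ncard_le hsub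
    (by rw [hcard, ncard_spiderMid]) (Set.toFinite _)).symm

lemma spider_domNum {n : ℕ} (hn : 2 ≤ n) : domNum (spider n) = n := by
  have hmem : n ∈ {m | ∃ D : Set (Unit ⊕ (Fin n ⊕ Fin n × Fin 2)),
      IsDomSet (spider n) D ∧ D.ncard = m} :=
    ⟨spiderMid n, spiderMid_dom (by omega), ncard_spiderMid⟩
  refine le_antisymm (Nat.sInf_le hmem) (le_csInf ⟨n, hmem⟩ ?_)
  rintro m ⟨D, hD, rfl⟩
  exact dom_lower hD

lemma spider_eternal {n : ℕ} (hn : 2 ≤ n) : eternalNum (spider n) 2 = 2 := by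
  set F : Set (Multiset (Unit ⊕ (Fin n ⊕ Fin n × Fin 2))) :=
    {D | ∃ x, D = {ctr n, x}} with hF
  have hfam : IsEternalFamily (spider n) 2 2 F := by
    refine ⟨⟨{ctr n, ctr n}, ⟨ctr n, rfl⟩⟩, ?_, ?_⟩
    · rintro D ⟨x, rfl⟩
      exact ⟨by simp, fun w => ⟨ctr n, by simp, within_ctr w⟩⟩
    · rintro D ⟨x, rfl⟩ w
      refine ⟨{ctr n, w}, ⟨w, rfl⟩, by simp, ?_⟩
      have h : ({ctr n, w} : Multiset _) = w ::ₘ {ctr n} := Multiset.cons_swap _ _ _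
      rw [h]
      exact Multiset.Rel.cons (within_ctr w)
        (Multiset.Rel.cons (within_ctr' x) Multiset.Rel.zero)
  have hmem : 2 ∈ {m | ∃ F : Set (Multiset (Unit ⊕ (Fin n ⊕ Fin n × Fin 2))),
      IsEternalFamily (spider n) 2 m F} := ⟨F, hfam⟩
  refine le_antisymm (Nat.sInf_le hmem) (le_csInf ⟨2, hmem⟩ ?_)
  rintro m ⟨F', ⟨D, hD⟩, hprop, hdef⟩
  have hcard := (hprop D hD).1
  match m, hcard with
  | 0, hcard =>
    obtain ⟨x, hx, -⟩ := (hprop D hD).2 (ctr n)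
    rw [Multiset.card_eq_zero.mp hcard] at hx
    simp at hx
  | 1, hcard =>
    exfalso
    set i0 : Fin n := ⟨0, by omega⟩
    set i1 : Fin n := ⟨1, by omega⟩
    obtain ⟨D', hD', hw, -⟩ := hdef D hD (lf i0 0)
    obtain ⟨a, rfl⟩ := Multiset.card_eq_one.mp (hprop D' hD').1
    have ha : a = lf i0 0 := by have := hw; simp_all
    subst ha
    obtain ⟨x, hx, hwd⟩ := (hprop _ hD').2 (lf i1 0)
    have hx' : x = lf i0 0 := by simpa using hx
    subst hx'
    exact not_within_lf_lf (by simp [i0, i1, Fin.ext_iff]) 0 0 hwd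
  | (m + 2), _ => omega

-- ===== end auxiliary material =====

/-- for `T_n` (`n ≥ 2`), `γ(T_n) = n` and `γ^∞_{all,2}(T_n) = 2`; for `n ≥ 3`
the eternal distance-2 domination number is strictly smaller than the domination number,
although `{l_1, …, l_n}` is the unique minimum dominating set and each of its vertices has
at least two private neighbours. -/
theorem spider_example (n : ℕ) (hn : 2 ≤ n) :
    domNum (spider n) = n ∧
    eternalNum (spider n) 2 = 2 ∧
    (3 ≤ n → eternalNum (spider n) 2 < domNum (spider n)) ∧
    IsDomSet (spider n) (spiderMid n) ∧ (spiderMid n).ncard = n ∧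
    (∀ D : Set (Unit ⊕ (Fin n ⊕ Fin n × Fin 2)),
      IsDomSet (spider n) D → D.ncard = domNum (spider n) → D = spiderMid n) ∧
    (∀ i : Fin n, ∃ w₁ w₂, w₁ ≠ w₂ ∧
      IsPrivateNbr (spider n) (spiderMid n) (Sum.inr (Sum.inl i)) w₁ ∧
      IsPrivateNbr (spider n) (spiderMid n) (Sum.inr (Sum.inl i)) w₂) := by
  have hdom := spider_domNum hn
  have het := spider_eternal hn
  refine ⟨hdom, het, fun h3 => by omega, spiderMid_dom (by omega), ncard_spiderMid, ?_, ?_⟩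
  · intro D hD hcard
    exact dom_unique hn hD (by rw [hcard, hdom])
  · intro i
    refine ⟨lf i 0, lf i 1, by simp [Prod.ext_iff], ?_, ?_⟩ <;>
    · refine ⟨Or.inr (adj_mid_lf i _), ?_⟩
      rintro d ⟨i', rfl⟩ hne hdom'
      rcases dominates_lf hdom' with h | h
      · simp at h
      · exact hne h

end EternalDom
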